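/- Suppose r, Ω, ψ satisfy the toroidally symmetric Einstein–Klein-Gordon system (EKG1)–(EKG5) on U. Then the final renormalised Hawking mass ϖ = (2rᵤrᵥr/Ω²)e^{4πgψ²} + r³/(2l²) satisfies ∂ᵤϖ = −(8πr²rᵥ/Ω²)(∇̃ᵤψ)²e^{4πgψ²} + (4πg²rᵤ/r)ϖψ² + (rᵤr²/l²)f(ψ²) and ∂ᵥϖ = −(8πr²rᵤ/Ω²)(∇̃ᵥψ)²e^{4πgψ²} + (4πg²rᵥ/r)ϖψ² + (rᵥr²/l²)f(ψ²), where f(x) = e^{4πgx}(4πax − 3/2) − 2πg²x + 3/2. -/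

import Mathlib

open Topology Filter

/-- Partial derivative in the first (`u`) coordinate. -/
noncomputable def pdu (f : ℝ × ℝ → ℝ) (p : ℝ × ℝ) : ℝ := deriv (fun u => f (u, p.2)) p.1

/-- Partial derivative in the second (`v`) coordinate. -/
noncomputable def pdv (f : ℝ × ℝ → ℝ) (p : ℝ × ℝ) : ℝ := deriv (fun v => f (p.1, v)) p.2

/-- The final renormalised Hawking mass `ϖ = (2rᵤrᵥr/Ω²)e^{4πgψ²} + r³/(2l²)`. -/
noncomputable def varpi (l g : ℝ) (r Ω ψ : ℝ × ℝ → ℝ) (q : ℝ × ℝ) : ℝ :=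
  2 * pdu r q * pdv r q * r q / (Ω q) ^ 2 * Real.exp (4 * Real.pi * g * (ψ q) ^ 2)
    + (r q) ^ 3 / (2 * l ^ 2)

/-- The function `f(x) = e^{4πgx}(4πax − 3/2) − 2πg²x + 3/2`. -/
noncomputable def fKG (a g x : ℝ) : ℝ :=
  Real.exp (4 * Real.pi * g * x) * (4 * Real.pi * a * x - 3 / 2)
    - 2 * Real.pi * g ^ 2 * x + 3 / 2


lemma hasDerivAt_line_u {f : ℝ × ℝ → ℝ} {q : ℝ × ℝ} (h : DifferentiableAt ℝ f q) :
    HasDerivAt (fun u => f (u, q.2)) (fderiv ℝ f q (1, 0)) q.1 := by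
  have hline : HasDerivAt (fun u : ℝ => (u, q.2)) ((1 : ℝ), (0 : ℝ)) q.1 :=
    (hasDerivAt_id q.1).prodMk (hasDerivAt_const _ _)
  have := h.hasFDerivAt.comp_hasDerivAt q.1 (by simpa using hline)
  simpa [Function.comp_def] using this

lemma hasDerivAt_line_v {f : ℝ × ℝ → ℝ} {q : ℝ × ℝ} (h : DifferentiableAt ℝ f q) :
    HasDerivAt (fun v => f (q.1, v)) (fderiv ℝ f q (0, 1)) q.2 := by
  have hline : HasDerivAt (fun v : ℝ => (q.1, v)) ((0 : ℝ), (1 : ℝ)) q.2 :=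
    (hasDerivAt_const _ _).prodMk (hasDerivAt_id q.2)
  have := h.hasFDerivAt.comp_hasDerivAt q.2 (by simpa using hline)
  simpa [Function.comp_def] using this

lemma pdu_eq {f : ℝ × ℝ → ℝ} {q : ℝ × ℝ} (h : DifferentiableAt ℝ f q) :
    pdu f q = fderiv ℝ f q (1, 0) := (hasDerivAt_line_u h).deriv

lemma pdv_eq {f : ℝ × ℝ → ℝ} {q : ℝ × ℝ} (h : DifferentiableAt ℝ f q) :
    pdv f q = fderiv ℝ f q (0, 1) := (hasDerivAt_line_v h).deriv

lemma hasDerivAt_pdu_u {f : ℝ × ℝ → ℝ} {q : ℝ × ℝ} (h : DifferentiableAt ℝ f q) :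
    HasDerivAt (fun u => f (u, q.2)) (pdu f q) q.1 := by
  rw [pdu_eq h]; exact hasDerivAt_line_u h

lemma hasDerivAt_pdv_v {f : ℝ × ℝ → ℝ} {q : ℝ × ℝ} (h : DifferentiableAt ℝ f q) :
    HasDerivAt (fun v => f (q.1, v)) (pdv f q) q.2 := by
  rw [pdv_eq h]; exact hasDerivAt_line_v h

lemma key {f : ℝ × ℝ → ℝ} {U : Set (ℝ × ℝ)} (hU : IsOpen U) (hf : ContDiffOn ℝ 2 f U)
    {p : ℝ × ℝ} (hp : p ∈ U) :
    HasDerivAt (fun u => pdu f (u, p.2)) (pdu (pdu f) p) p.1 ∧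
    HasDerivAt (fun u => pdv f (u, p.2)) (pdv (pdu f) p) p.1 := by
  have hfat : ContDiffAt ℝ 2 f p := hf.contDiffAt (hU.mem_nhds hp)
  have hFd : DifferentiableAt ℝ (fderiv ℝ f) p :=
    (hfat.fderiv_right (m := 1) (by norm_num)).differentiableAt one_ne_zero
  have hev : ∀ᶠ q in 𝓝 p, DifferentiableAt ℝ f q := by
    filter_upwards [hU.mem_nhds hp] with q hq
    exact (hf.differentiableOn two_ne_zero).differentiableAt (hU.mem_nhds hq)
  set A := fderiv ℝ (fderiv ℝ f) p with hA
  have hsymm : A (1, 0) (0, 1) = A (0, 1) (1, 0) := hfat.isSymmSndFDerivAt (by simp [minSmoothness_of_isRCLikeNormedField]) _ _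
  have hcu : Filter.Tendsto (fun u : ℝ => (u, p.2)) (𝓝 p.1) (𝓝 p) := by
    have : Continuous (fun u : ℝ => (u, p.2)) := continuous_id.prodMk continuous_const
    simpa using this.tendsto p.1
  have hcv : Filter.Tendsto (fun v : ℝ => (p.1, v)) (𝓝 p.2) (𝓝 p) := by
    have : Continuous (fun v : ℝ => (p.1, v)) := continuous_const.prodMk continuous_id
    simpa using this.tendsto p.2
  have heval : ∀ w : ℝ × ℝ, HasFDerivAt (fun q => fderiv ℝ f q w)
      ((ContinuousLinearMap.apply ℝ ℝ w).comp A) p := by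
    intro w
    exact (ContinuousLinearMap.apply ℝ ℝ w).hasFDerivAt.comp p hFd.hasFDerivAt
  constructor
  · have h1 : HasDerivAt (fun u => fderiv ℝ f (u, p.2) (1, 0)) (A (1, 0) (1, 0)) p.1 := by
      have hline : HasDerivAt (fun u : ℝ => (u, p.2)) ((1 : ℝ), (0 : ℝ)) p.1 :=
        (hasDerivAt_id p.1).prodMk (hasDerivAt_const _ _)
      have := (heval (1, 0)).comp_hasDerivAt p.1 (by simpa using hline)
      simpa [Function.comp_def] using this
    have h1' : HasDerivAt (fun u => pdu f (u, p.2)) (A (1, 0) (1, 0)) p.1 := by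
      refine h1.congr_of_eventuallyEq ?_
      filter_upwards [hcu.eventually (hev.mono fun q hq => pdu_eq hq)] with u hu using hu
    have : pdu (pdu f) p = A (1, 0) (1, 0) := h1'.deriv
    rw [this]; exact h1'
  · have h2 : HasDerivAt (fun u => fderiv ℝ f (u, p.2) (0, 1)) (A (1, 0) (0, 1)) p.1 := by
      have hline : HasDerivAt (fun u : ℝ => (u, p.2)) ((1 : ℝ), (0 : ℝ)) p.1 :=
        (hasDerivAt_id p.1).prodMk (hasDerivAt_const _ _)
      have := (heval (0, 1)).comp_hasDerivAt p.1 (by simpa using hline)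
      simpa [Function.comp_def] using this
    have h2' : HasDerivAt (fun u => pdv f (u, p.2)) (A (1, 0) (0, 1)) p.1 := by
      refine h2.congr_of_eventuallyEq ?_
      filter_upwards [hcu.eventually (hev.mono fun q hq => pdv_eq hq)] with u hu using hu
    have h3 : HasDerivAt (fun v => fderiv ℝ f (p.1, v) (1, 0)) (A (0, 1) (1, 0)) p.2 := by
      have hline : HasDerivAt (fun v : ℝ => (p.1, v)) ((0 : ℝ), (1 : ℝ)) p.2 :=
        (hasDerivAt_const _ _).prodMk (hasDerivAt_id p.2)
      have := (heval (1, 0)).comp_hasDerivAt p.2 (by simpa using hline)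
      simpa [Function.comp_def] using this
    have h3' : HasDerivAt (fun v => pdu f (p.1, v)) (A (0, 1) (1, 0)) p.2 := by
      refine h3.congr_of_eventuallyEq ?_
      filter_upwards [hcv.eventually (hev.mono fun q hq => pdu_eq hq)] with v hv using hv
    have : pdv (pdu f) p = A (0, 1) (1, 0) := h3'.deriv
    rw [this, ← hsymm]; exact h2'



lemma aux {U : Set (ℝ × ℝ)} (hU : IsOpen U) (r Ω ψ : ℝ × ℝ → ℝ) (l a g : ℝ) (hl : l ≠ 0)
    (hrC : ContDiffOn ℝ 2 r U) (hΩC : ContDiffOn ℝ 2 Ω U) (hψC : ContDiffOn ℝ 2 ψ U)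
    (hrpos : ∀ p ∈ U, 0 < r p) (hΩpos : ∀ p ∈ U, 0 < Ω p)
    (hEKG1 : ∀ p ∈ U, pdu (fun q => pdu r q / (Ω q) ^ 2) p
        = -(4 * Real.pi) * r p * (pdu ψ p) ^ 2 / (Ω p) ^ 2)
    (hEKG3 : ∀ p ∈ U, pdv (pdu r) p = -(pdu r p * pdv r p) / r p
        + (2 * Real.pi * a * r p / l ^ 2) * (Ω p) ^ 2 * (ψ p) ^ 2
        - (3 / 4) * (r p / l ^ 2) * (Ω p) ^ 2) :
    ∀ p ∈ U,
      pdu (varpi l g r Ω ψ) p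
        = -(8 * Real.pi * (r p) ^ 2 * pdv r p / (Ω p) ^ 2)
              * (pdu ψ p - g * (pdu r p / r p) * ψ p) ^ 2
              * Real.exp (4 * Real.pi * g * (ψ p) ^ 2)
          + (4 * Real.pi * g ^ 2 * pdu r p / r p) * varpi l g r Ω ψ p * (ψ p) ^ 2
          + (pdu r p * (r p) ^ 2 / l ^ 2) * fKG a g ((ψ p) ^ 2) := by
  intro p hp
  have hr0 : r p ≠ 0 := (hrpos p hp).ne'
  have hΩ0 : Ω p ≠ 0 := (hΩpos p hp).ne'
  have hΩ2 : (Ω p) ^ 2 ≠ 0 := pow_ne_zero _ hΩ0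
  have hdr : DifferentiableAt ℝ r p :=
    (hrC.differentiableOn two_ne_zero).differentiableAt (hU.mem_nhds hp)
  have hdΩ : DifferentiableAt ℝ Ω p :=
    (hΩC.differentiableOn two_ne_zero).differentiableAt (hU.mem_nhds hp)
  have hdψ : DifferentiableAt ℝ ψ p :=
    (hψC.differentiableOn two_ne_zero).differentiableAt (hU.mem_nhds hp)
  obtain ⟨hRuu, hRuv⟩ := key hU hrC hp
  have hR : HasDerivAt (fun u => r (u, p.2)) (pdu r p) p.1 := hasDerivAt_pdu_u hdr
  have hO : HasDerivAt (fun u => Ω (u, p.2)) (pdu Ω p) p.1 := hasDerivAt_pdu_u hdΩ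
  have hP : HasDerivAt (fun u => ψ (u, p.2)) (pdu ψ p) p.1 := hasDerivAt_pdu_u hdψ
  -- EKG1 unpacked
  have hdiv := (hRuu.div (hO.pow 2) hΩ2)
  have e1 : (pdu (pdu r) p * Ω p ^ 2 - pdu r p * (2 * Ω p ^ 1 * pdu Ω p)) / (Ω p ^ 2) ^ 2
      = -(4 * Real.pi) * r p * (pdu ψ p) ^ 2 / (Ω p) ^ 2 := by
    have h := hEKG1 p hp
    rw [pdu] at h
    rw [← h]
    exact (hdiv.deriv).symm
  have hruu : pdu (pdu r) p
      = -(4 * Real.pi) * r p * (pdu ψ p) ^ 2 + 2 * pdu r p * pdu Ω p / Ω p := by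
    have e1' : (pdu (pdu r) p * Ω p ^ 2 - pdu r p * (2 * Ω p * pdu Ω p)) * Ω p ^ 2
        = -(4 * Real.pi * r p * pdu ψ p ^ 2 * (Ω p ^ 2) ^ 2) := by
      field_simp at e1; linear_combination (Ω p ^ 3) * e1
    have hruuΩ : pdu (pdu r) p * Ω p
        = -(4 * Real.pi) * r p * (pdu ψ p) ^ 2 * Ω p + 2 * pdu r p * pdu Ω p :=
      mul_left_cancel₀ (pow_ne_zero 3 hΩ0) (by linear_combination e1')
    field_simp
    linear_combination hruuΩ
  have hruv := hEKG3 p hp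
  -- the big derivative
  have hexp : HasDerivAt (fun u => Real.exp (4 * Real.pi * g * (ψ (u, p.2)) ^ 2))
      (Real.exp (4 * Real.pi * g * (ψ p) ^ 2) * (4 * Real.pi * g * (2 * ψ p ^ 1 * pdu ψ p)))
      p.1 := ((hP.pow 2).const_mul (4 * Real.pi * g)).exp
  have hvar := (((((hRuu.const_mul 2).mul hRuv).mul hR).div (hO.pow 2) hΩ2).mul hexp).add
      ((hR.pow 3).div_const (2 * l ^ 2))
  rw [hruu, hruv] at hvar
  refine (hvar.deriv).trans ?_
  simp only [varpi, fKG]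
  norm_num
  field_simp
  ring


lemma pdu_comp_swap (f : ℝ × ℝ → ℝ) (q : ℝ × ℝ) : pdu (f ∘ Prod.swap) q = pdv f q.swap := rfl

lemma pdv_comp_swap (f : ℝ × ℝ → ℝ) (q : ℝ × ℝ) : pdv (f ∘ Prod.swap) q = pdu f q.swap := rfl

lemma mixed {f : ℝ × ℝ → ℝ} {U : Set (ℝ × ℝ)} (hU : IsOpen U) (hf : ContDiffOn ℝ 2 f U)
    {p : ℝ × ℝ} (hp : p ∈ U) : pdu (pdv f) p = pdv (pdu f) p := ((key hU hf hp).2).deriv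


/-- If `r, Ω, ψ` satisfy the toroidally symmetric Einstein–Klein-Gordon system
(EKG1)–(EKG5) on an open set `U`, then the final renormalised Hawking mass satisfies
`∂ᵤϖ = −(8πr²rᵥ/Ω²)(∇̃ᵤψ)²e^{4πgψ²} + (4πg²rᵤ/r)ϖψ² + (rᵤr²/l²)f(ψ²)` and the
symmetric equation in `v`, where `∇̃ᵤψ = ψᵤ − g(rᵤ/r)ψ`, `∇̃ᵥψ = ψᵥ − g(rᵥ/r)ψ`. -/
theorem stmt_4 (U : Set (ℝ × ℝ)) (hU : IsOpen U)
    (r Ω ψ : ℝ × ℝ → ℝ)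
    (l κ a g : ℝ) (hl : 0 < l) (hκ : κ ∈ Set.Ioo (0 : ℝ) 1)
    (ha : a = κ ^ 2 / 2 - 9 / 8) (hg : g = -3 / 2 + κ)
    (hrC : ContDiffOn ℝ 2 r U) (hΩC : ContDiffOn ℝ 2 Ω U) (hψC : ContDiffOn ℝ 2 ψ U)
    (hrpos : ∀ p ∈ U, 0 < r p) (hΩpos : ∀ p ∈ U, 0 < Ω p)
    (hEKG1 : ∀ p ∈ U, pdu (fun q => pdu r q / (Ω q) ^ 2) p
        = -(4 * Real.pi) * r p * (pdu ψ p) ^ 2 / (Ω p) ^ 2)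
    (hEKG2 : ∀ p ∈ U, pdv (fun q => pdv r q / (Ω q) ^ 2) p
        = -(4 * Real.pi) * r p * (pdv ψ p) ^ 2 / (Ω p) ^ 2)
    (hEKG3 : ∀ p ∈ U, pdv (pdu r) p = -(pdu r p * pdv r p) / r p
        + (2 * Real.pi * a * r p / l ^ 2) * (Ω p) ^ 2 * (ψ p) ^ 2
        - (3 / 4) * (r p / l ^ 2) * (Ω p) ^ 2)
    (hEKG4 : ∀ p ∈ U, pdv (pdu (fun q => Real.log (Ω q))) p
        = -(4 * Real.pi) * pdu ψ p * pdv ψ p + (pdu r p * pdv r p) / (r p) ^ 2)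
    (hEKG5 : ∀ p ∈ U, pdv (pdu ψ) p = -(pdu r p / r p) * pdv ψ p
        - (pdv r p / r p) * pdu ψ p - ((Ω p) ^ 2 * a / (2 * l ^ 2)) * ψ p) :
    ∀ p ∈ U,
      pdu (varpi l g r Ω ψ) p
        = -(8 * Real.pi * (r p) ^ 2 * pdv r p / (Ω p) ^ 2)
              * (pdu ψ p - g * (pdu r p / r p) * ψ p) ^ 2
              * Real.exp (4 * Real.pi * g * (ψ p) ^ 2)
          + (4 * Real.pi * g ^ 2 * pdu r p / r p) * varpi l g r Ω ψ p * (ψ p) ^ 2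
          + (pdu r p * (r p) ^ 2 / l ^ 2) * fKG a g ((ψ p) ^ 2)
      ∧
      pdv (varpi l g r Ω ψ) p
        = -(8 * Real.pi * (r p) ^ 2 * pdu r p / (Ω p) ^ 2)
              * (pdv ψ p - g * (pdv r p / r p) * ψ p) ^ 2
              * Real.exp (4 * Real.pi * g * (ψ p) ^ 2)
          + (4 * Real.pi * g ^ 2 * pdv r p / r p) * varpi l g r Ω ψ p * (ψ p) ^ 2
          + (pdv r p * (r p) ^ 2 / l ^ 2) * fKG a g ((ψ p) ^ 2) := by
  intro p hp
  have hsw : ContDiff ℝ 2 (Prod.swap : ℝ × ℝ → ℝ × ℝ) := contDiff_snd.prodMk contDiff_fst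
  have hU' : IsOpen (Prod.swap ⁻¹' U : Set (ℝ × ℝ)) := hU.preimage continuous_swap
  have hmaps : Set.MapsTo (Prod.swap : ℝ × ℝ → ℝ × ℝ) (Prod.swap ⁻¹' U) U := fun x hx => hx
  have hfun1 : pdu (r ∘ Prod.swap) = (pdv r) ∘ Prod.swap := funext fun q' => pdu_comp_swap r q'
  constructor
  · exact aux hU r Ω ψ l a g hl.ne' hrC hΩC hψC hrpos hΩpos hEKG1 hEKG3 p hp
  · have h := aux (U := Prod.swap ⁻¹' U) hU' (r ∘ Prod.swap) (Ω ∘ Prod.swap) (ψ ∘ Prod.swap)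
      l a g hl.ne'
      (hrC.comp hsw.contDiffOn hmaps) (hΩC.comp hsw.contDiffOn hmaps)
      (hψC.comp hsw.contDiffOn hmaps)
      (fun q hq => hrpos _ hq) (fun q hq => hΩpos _ hq)
      (fun q hq => by
        have e : (fun q' => pdu (r ∘ Prod.swap) q' / ((Ω ∘ Prod.swap) q') ^ 2)
            = (fun q' => pdv r q' / (Ω q') ^ 2) ∘ Prod.swap := by
          funext q'
          simp only [pdu_comp_swap, Function.comp_apply]
        rw [e, pdu_comp_swap]
        simp only [pdu_comp_swap, Function.comp_apply]
        exact hEKG2 q.swap hq)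
      (fun q hq => by
        rw [hfun1, pdv_comp_swap, mixed hU hrC hq]
        simp only [pdu_comp_swap, pdv_comp_swap, Function.comp_apply]
        rw [hEKG3 q.swap hq]; ring)
      (Prod.swap p) hp
    have hfun : varpi l g (r ∘ Prod.swap) (Ω ∘ Prod.swap) (ψ ∘ Prod.swap)
        = (varpi l g r Ω ψ) ∘ Prod.swap := by
      funext q
      simp only [varpi, Function.comp_apply, pdu_comp_swap, pdv_comp_swap]
      ring
    rw [hfun, pdu_comp_swap] at h
    simp only [pdu_comp_swap, pdv_comp_swap, Function.comp_apply, Prod.swap_swap] at h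
    exact h
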